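/- Let L(n) = lcm_{mn < i ≤ ln} {f(i)} and let P(n) be the set of prime factors of L(n) that do not divide lcm(a₁b₂ − a₂b₁, q). If p ∈ P(n) and v_p(L(n)) ≥ 2, then p² divides a₁i+b₁ or a₂i+b₂ for some integer i with mn < i ≤ ln; in particular p ≤ max(√(a₁ln+b₁), √(a₂ln+b₂)). -/

import Mathlib

lemma pow_dvd_lcm_pair {p k x y : ℕ} (hp : p.Prime) (hx : x ≠ 0) (hy : y ≠ 0)
    (h : p ^ k ∣ Nat.lcm x y) : p ^ k ∣ x ∨ p ^ k ∣ y := by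
  rw [hp.pow_dvd_iff_le_factorization (Nat.lcm_ne_zero hx hy),
    Nat.factorization_lcm hx hy] at h
  simp only [Finsupp.sup_apply, le_sup_iff] at h
  rcases h with h | h
  · exact Or.inl ((hp.pow_dvd_iff_le_factorization hx).2 h)
  · exact Or.inr ((hp.pow_dvd_iff_le_factorization hy).2 h)

lemma pow_dvd_finset_lcm {p k : ℕ} (hp : p.Prime) (hk : k ≠ 0)
    (s : Finset ℕ) (f : ℕ → ℕ) (hf : ∀ i ∈ s, f i ≠ 0)
    (h : p ^ k ∣ s.lcm f) : ∃ i ∈ s, p ^ k ∣ f i := by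
  induction s using Finset.induction_on with
  | empty =>
    simp only [Finset.lcm_empty] at h
    have := Nat.eq_one_of_dvd_one h
    exact absurd this (Nat.one_lt_pow hk hp.one_lt).ne'
  | @insert a s ha ih =>
    rw [Finset.lcm_insert] at h
    have hlcm : s.lcm f ≠ 0 := by
      intro h0
      obtain ⟨i, hi, h0⟩ := (Finset.lcm_eq_zero_iff).1 h0
      exact hf i (Finset.mem_insert_of_mem hi) h0
    have : p ^ k ∣ f a ∨ p ^ k ∣ s.lcm f :=
      pow_dvd_lcm_pair hp (hf a (Finset.mem_insert_self a s)) hlcm h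
    rcases this with h' | h'
    · exact ⟨a, Finset.mem_insert_self a s, h'⟩
    · obtain ⟨i, hi, hdi⟩ := ih (fun i hi => hf i (Finset.mem_insert_of_mem hi)) h'
      exact ⟨i, Finset.mem_insert_of_mem hi, hdi⟩

/-- `L(n) = lcm_{mn < i ≤ ln} f(i)` with `f(i) = (a₁ i + b₁)(a₂ i + b₂)`. -/
def Lfn (l m a₁ a₂ b₁ b₂ n : ℕ) : ℕ :=
  (Finset.Ioc (m * n) (l * n)).lcm (fun i => (a₁ * i + b₁) * (a₂ * i + b₂))

/-- `P(n)`: the prime factors of `L(n)` not dividing `lcm(a₁b₂ − a₂b₁, q)`. -/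
def Pfact (l m a₁ a₂ b₁ b₂ q n : ℕ) : Set ℕ :=
  {p : ℕ | p.Prime ∧ p ∣ Lfn l m a₁ a₂ b₁ b₂ n ∧
    ¬ p ∣ Nat.lcm (Int.natAbs ((a₁ : ℤ) * b₂ - (a₂ : ℤ) * b₁)) q}

theorem padic_val_ge_two_implies_sq_dvd (l m : ℕ) (hlm : m < l)
    (a₁ a₂ b₁ b₂ : ℕ) (ha₁ : 0 < a₁) (ha₂ : 0 < a₂) (hb₁ : 0 < b₁) (hb₂ : 0 < b₂)
    (hcop₁ : Nat.gcd a₁ b₁ = 1) (hcop₂ : Nat.gcd a₂ b₂ = 1) (hne : a₁ * b₂ ≠ a₂ * b₁)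
    (q : ℕ) (hq : q = Nat.lcm a₁ a₂)
    (n p : ℕ) (hp : p ∈ Pfact l m a₁ a₂ b₁ b₂ q n)
    (hv : 2 ≤ padicValNat p (Lfn l m a₁ a₂ b₁ b₂ n)) :
    (∃ i : ℕ, m * n < i ∧ i ≤ l * n ∧ (p ^ 2 ∣ a₁ * i + b₁ ∨ p ^ 2 ∣ a₂ * i + b₂)) ∧
      (p : ℝ) ≤ max (Real.sqrt ((a₁ : ℝ) * l * n + b₁)) (Real.sqrt ((a₂ : ℝ) * l * n + b₂)) := by
  obtain ⟨hpp, hpd, hpnd⟩ := hp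
  -- p^2 divides L(n)
  have hsq : p ^ 2 ∣ Lfn l m a₁ a₂ b₁ b₂ n :=
    dvd_trans (pow_dvd_pow p hv) (pow_padicValNat_dvd)
  have hfne : ∀ i ∈ Finset.Ioc (m * n) (l * n),
      (fun i => (a₁ * i + b₁) * (a₂ * i + b₂)) i ≠ 0 := by
    intro i _
    positivity
  obtain ⟨i, hi, hdi⟩ := pow_dvd_finset_lcm hpp (by norm_num) _ _ hfne hsq
  rw [Finset.mem_Ioc] at hi
  -- p^2 divides one of the factors
  have key : p ^ 2 ∣ a₁ * i + b₁ ∨ p ^ 2 ∣ a₂ * i + b₂ := by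
    by_contra hcon
    push_neg at hcon
    obtain ⟨h1, h2⟩ := hcon
    -- then p divides both factors
    have hd1 : p ∣ a₁ * i + b₁ := by
      by_contra hnd
      have hcp : Nat.Coprime (p ^ 2) (a₁ * i + b₁) :=
        (Nat.Prime.coprime_iff_not_dvd hpp).2 hnd |>.pow_left 2
      exact h2 (hcp.dvd_of_dvd_mul_left hdi)
    have hd2 : p ∣ a₂ * i + b₂ := by
      by_contra hnd
      have hcp : Nat.Coprime (p ^ 2) (a₂ * i + b₂) :=
        (Nat.Prime.coprime_iff_not_dvd hpp).2 hnd |>.pow_left 2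
      exact h1 (hcp.dvd_of_dvd_mul_right hdi)
    -- hence p divides a₁b₂ - a₂b₁
    have hz1 : (p : ℤ) ∣ (a₁ : ℤ) * i + b₁ := by exact_mod_cast Int.natCast_dvd_natCast.2 hd1
    have hz2 : (p : ℤ) ∣ (a₂ : ℤ) * i + b₂ := by exact_mod_cast Int.natCast_dvd_natCast.2 hd2
    have hz : (p : ℤ) ∣ (a₁ : ℤ) * b₂ - (a₂ : ℤ) * b₁ := by
      have := dvd_sub (Dvd.dvd.mul_left hz2 (a₁ : ℤ)) (Dvd.dvd.mul_left hz1 (a₂ : ℤ))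
      have heq : (a₁ : ℤ) * ((a₂ : ℤ) * i + b₂) - (a₂ : ℤ) * ((a₁ : ℤ) * i + b₁)
          = (a₁ : ℤ) * b₂ - (a₂ : ℤ) * b₁ := by ring
      rwa [heq] at this
    have : p ∣ Int.natAbs ((a₁ : ℤ) * b₂ - (a₂ : ℤ) * b₁) :=
      Int.natCast_dvd_natCast.1 ((Int.dvd_natAbs).2 hz)
    exact hpnd (this.trans (Nat.dvd_lcm_left _ _))
  refine ⟨⟨i, hi.1, hi.2, key⟩, ?_⟩
  -- the bound
  have hb : ∀ a b : ℕ, p ^ 2 ∣ a * i + b → 0 < b →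
      (p : ℝ) ≤ Real.sqrt ((a : ℝ) * l * n + b) := by
    intro a b hdvd hbpos
    have hle : p ^ 2 ≤ a * i + b := Nat.le_of_dvd (by positivity) hdvd
    have hle2 : a * i + b ≤ a * (l * n) + b :=
      Nat.add_le_add_right (Nat.mul_le_mul_left a hi.2) b
    rw [show Real.sqrt ((a : ℝ) * l * n + b) = Real.sqrt ((a * (l * n) + b : ℕ)) by
      push_cast; ring_nf]
    have : ((p : ℝ)) ^ 2 ≤ ((a * (l * n) + b : ℕ) : ℝ) := by
      exact_mod_cast (hle.trans hle2)
    calc (p : ℝ) = Real.sqrt ((p : ℝ) ^ 2) := by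
          rw [Real.sqrt_sq (by positivity)]
      _ ≤ _ := Real.sqrt_le_sqrt this
  rcases key with h | h
  · exact le_max_of_le_left (hb a₁ b₁ h hb₁)
  · exact le_max_of_le_right (hb a₂ b₂ h hb₂)
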